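/- Let X̄ be a real N×p matrix with 𝒦̂ = X̄ X̄ᵀ invertible, let Y ∈ ℝ^N, x̄* ∈ ℝ^p, η > 0, and let θ : [0,∞) → ℝ^p be differentiable with θ′(t) = − η X̄ᵀ (X̄ θ(t) − Y) for all t ≥ 0 (gradient flow on the readout-layer squared loss). Then for every t ≥ 0 the prediction f_t(x*) = ⟨x̄*, θ(t)⟩ satisfies f_t(x*) = f_0(x*) + 𝒦̂(x*,𝒳) 𝒦̂⁻¹ (exp(−η 𝒦̂ t) − I)(f_0(𝒳) − Y), where f_0(𝒳) = X̄ θ(0) ∈ ℝ^N and 𝒦̂(x*,𝒳) = (X̄ x̄*)ᵀ ∈ ℝ^{1×N}. -/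

import Mathlib

open Matrix

/-- Training only the readout layer by gradient flow
`θ′(t) = −η X̄ᵀ(X̄θ(t) − Y)` yields the closed-form test prediction
`f_t(x*) = f_0(x*) + 𝒦̂(x*,𝒳) 𝒦̂⁻¹ (exp(−η𝒦̂t) − I)(f_0(𝒳) − Y)`,
where `f_t(x*) = ⟨x̄*, θ(t)⟩`, `f_0(𝒳) = X̄θ(0)` and `𝒦̂(x*,𝒳) = (X̄x̄*)ᵀ`. -/
theorem readout_layer_gradient_flow_prediction {N p : ℕ}
    (Xb : Matrix (Fin N) (Fin p) ℝ)
    (K : Matrix (Fin N) (Fin N) ℝ) (hK : K = Xb * Xbᵀ) (hKinv : IsUnit K)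
    (Y : Fin N → ℝ) (xstar : Fin p → ℝ) (η : ℝ) (hη : 0 < η)
    (θ : ℝ → (Fin p → ℝ))
    (hflow : ∀ t : ℝ, 0 ≤ t →
      HasDerivAt θ (-(η • (Xbᵀ.mulVec (Xb.mulVec (θ t) - Y)))) t) :
    ∀ t : ℝ, 0 ≤ t →
      xstar ⬝ᵥ θ t =
        xstar ⬝ᵥ θ 0 +
          (Xb.mulVec xstar) ⬝ᵥ
            (K⁻¹.mulVec ((NormedSpace.exp (-(η * t) • K) - 1).mulVec
              (Xb.mulVec (θ 0) - Y))) := by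
  have hKdet : IsUnit K.det := (Matrix.isUnit_iff_isUnit_det K).mp hKinv
  have hinvK : K⁻¹ * K = 1 := Matrix.nonsing_inv_mul K hKdet
  set u0 : Fin N → ℝ := Xb.mulVec (θ 0) - Y with hu0
  -- the candidate solution
  set ψ : ℝ → (Fin p → ℝ) := fun t =>
    θ 0 + Xbᵀ.mulVec (K⁻¹.mulVec ((NormedSpace.exp (-(η * t) • K) - 1).mulVec u0))
    with hψ
  -- the vector field
  set F : (Fin p → ℝ) → (Fin p → ℝ) :=
    fun w => -(η • (Xbᵀ.mulVec (Xb.mulVec w - Y))) with hF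
  -- ψ solves the ODE
  have hψ_deriv : ∀ s : ℝ, HasDerivAt ψ (F (ψ s)) s := by
    intro s
    letI : NormedRing (Matrix (Fin N) (Fin N) ℝ) := Matrix.linftyOpNormedRing
    letI : NormedAlgebra ℝ (Matrix (Fin N) (Fin N) ℝ) := Matrix.linftyOpNormedAlgebra
    -- linear map A ↦ Xbᵀ (K⁻¹ (A u0))
    let L0 : Matrix (Fin N) (Fin N) ℝ →ₗ[ℝ] (Fin N → ℝ) :=
      { toFun := fun A => A.mulVec u0
        map_add' := fun A B => Matrix.add_mulVec A B u0
        map_smul' := fun c A => Matrix.smul_mulVec c A u0 }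
    let L : Matrix (Fin N) (Fin N) ℝ →ₗ[ℝ] (Fin p → ℝ) :=
      Xbᵀ.mulVecLin ∘ₗ (K⁻¹.mulVecLin ∘ₗ L0)
    let Lc := LinearMap.toContinuousLinearMap L
    have hLc : ∀ A : Matrix (Fin N) (Fin N) ℝ,
        Lc A = Xbᵀ.mulVec (K⁻¹.mulVec (A.mulVec u0)) := fun A => rfl
    have hinner : HasDerivAt (fun t : ℝ => -(η * t)) (-η) s := by
      have h := ((hasDerivAt_id s).const_mul η).neg
      simp only [mul_one] at h
      exact h
    have hexp : HasDerivAt (fun u : ℝ => NormedSpace.exp (u • K))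
        (K * NormedSpace.exp ((-(η * s)) • K)) (-(η * s)) :=
      hasDerivAt_exp_smul_const' K (-(η * s))
    have hE : HasDerivAt (fun t : ℝ => NormedSpace.exp (-(η * t) • K))
        ((-η) • (K * NormedSpace.exp (-(η * s) • K))) s := by
      have h := hexp.scomp s hinner
      exact h
    have hE1 : HasDerivAt (fun t : ℝ => NormedSpace.exp (-(η * t) • K) - 1)
        ((-η) • (K * NormedSpace.exp (-(η * s) • K))) s := hE.sub_const 1
    have hLψ : HasDerivAt ψ (Lc ((-η) • (K * NormedSpace.exp (-(η * s) • K)))) s := by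
      have h2 := (Lc.hasFDerivAt.comp_hasDerivAt s hE1).const_add (θ 0)
      exact h2
    convert hLψ using 1
    -- show F (ψ s) = Lc (-η • (K * E))
    set E := NormedSpace.exp (-(η * s) • K) with hE'
    have hXbψ : Xb.mulVec (ψ s) - Y = E.mulVec u0 := by
      have h1 : Xb.mulVec (Xbᵀ.mulVec (K⁻¹.mulVec ((E - 1).mulVec u0)))
          = (E - 1).mulVec u0 := by
        rw [Matrix.mulVec_mulVec, ← hK, Matrix.mulVec_mulVec,
          Matrix.mul_nonsing_inv K hKdet, Matrix.one_mulVec]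
      calc Xb.mulVec (ψ s) - Y
          = (Xb.mulVec (θ 0) - Y) + Xb.mulVec (Xbᵀ.mulVec (K⁻¹.mulVec ((E - 1).mulVec u0)))
            := by
              rw [hψ]
              simp only [Matrix.mulVec_add]
              abel
        _ = u0 + (E - 1).mulVec u0 := by rw [h1, hu0]
        _ = E.mulVec u0 := by
              rw [Matrix.sub_mulVec, Matrix.one_mulVec]; abel
    show -(η • (Xbᵀ.mulVec (Xb.mulVec (ψ s) - Y)))
        = Lc ((-η) • (K * E))
    rw [hXbψ, hLc]
    rw [Matrix.smul_mulVec, Matrix.mulVec_smul, Matrix.mulVec_smul,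
      Matrix.mulVec_mulVec, Matrix.mulVec_mulVec, Matrix.mulVec_mulVec]
    have hM : Xbᵀ * K⁻¹ * (K * E) = Xbᵀ * E := by
      rw [Matrix.mul_assoc Xbᵀ, ← Matrix.mul_assoc K⁻¹, hinvK, Matrix.one_mul]
    rw [hM, neg_smul]
  -- the vector field is Lipschitz
  let T : (Fin p → ℝ) →ₗ[ℝ] (Fin p → ℝ) :=
    (-η) • (Xbᵀ.mulVecLin ∘ₗ Xb.mulVecLin)
  let Tc := LinearMap.toContinuousLinearMap T
  have hFT : F = fun w => Tc w + η • Xbᵀ.mulVec Y := by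
    funext w
    have hTc : Tc w = (-η) • Xbᵀ.mulVec (Xb.mulVec w) := rfl
    show -(η • (Xbᵀ.mulVec (Xb.mulVec w - Y))) = Tc w + η • Xbᵀ.mulVec Y
    rw [hTc, Matrix.mulVec_sub, smul_sub]
    simp [neg_smul]
    abel
  have hLip : LipschitzWith ‖Tc‖₊ F := by
    rw [hFT]
    have h1 : Isometry (fun y : Fin p → ℝ => y + η • Xbᵀ.mulVec Y) :=
      isometry_add_right _
    have h2 := h1.lipschitz.comp Tc.lipschitz
    simp only [one_mul] at h2
    exact h2
  -- uniqueness of ODE solutions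
  intro t ht
  have hθψ : θ t = ψ t := by
    have hψ0 : θ 0 = ψ 0 := by
      rw [hψ]
      simp only [mul_zero, neg_zero, zero_smul, NormedSpace.exp_zero, sub_self,
        Matrix.zero_mulVec, Matrix.mulVec_zero, add_zero]
    have huniq := ODE_solution_unique (v := fun _ w => F w) (f := θ) (g := ψ)
      (a := 0) (b := t) (fun _ => hLip)
      (fun s hs => ((hflow s (Set.mem_Icc.mp hs).1).continuousAt).continuousWithinAt)
      (fun s hs => ((hflow s (Set.mem_Ico.mp hs).1).hasDerivWithinAt))
      (fun s _ => ((hψ_deriv s).continuousAt).continuousWithinAt)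
      (fun s _ => (hψ_deriv s).hasDerivWithinAt)
      hψ0
    exact huniq (Set.mem_Icc.mpr ⟨ht, le_refl t⟩)
  rw [hθψ, hψ]
  simp only [dotProduct_add]
  congr 1
  rw [Matrix.dotProduct_mulVec xstar, Matrix.vecMul_transpose]
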